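/- In any double algebra, an element $r \in R$ is invertible in the vertical algebra $V$ if and only if it has an inverse lying in $R$; more precisely, if $v\circ r = e = r\circ v$ for some $v \in A$ then $\Phi_R\Phi_T(v) = \Phi_R\Phi_B(v) = r^{-1} \in R$ is a two-sided vertical inverse of $r$. -/
import Mathlib


/-- A double algebra over a commutative ring `k`: a `k`-module `A` with two
associative unital bilinear multiplications, the vertical `vmul` (written `∘` in the
paper, unit `e`) and the horizontal `hmul` (written `⋆`, unit `i`), satisfying
axioms A1–A8 of Szlachányi's Definition 1.1. -/
structure DoubleAlgebra (k : Type*) (A : Type*) [CommRing k] [AddCommGroup A]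
    [Module k A] where
  vmul : A →ₗ[k] A →ₗ[k] A
  hmul : A →ₗ[k] A →ₗ[k] A
  e : A
  i : A
  vmul_assoc : ∀ a b c, vmul (vmul a b) c = vmul a (vmul b c)
  hmul_assoc : ∀ a b c, hmul (hmul a b) c = hmul a (hmul b c)
  vmul_e : ∀ a, vmul a e = a
  e_vmul : ∀ a, vmul e a = a
  hmul_i : ∀ a, hmul a i = a
  i_hmul : ∀ a, hmul i a = a
  A1 : ∀ a b, vmul (hmul a e) b = hmul (vmul (hmul a e) i) b
  A2 : ∀ a b, vmul a (hmul b e) = hmul (vmul i (hmul b e)) a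
  A3 : ∀ a b, hmul (vmul a i) b = vmul (hmul (vmul a i) e) b
  A4 : ∀ a b, hmul a (vmul b i) = vmul (hmul e (vmul b i)) a
  A5 : ∀ a b, vmul a (hmul e b) = hmul a (vmul i (hmul e b))
  A6 : ∀ a b, vmul (hmul e a) b = hmul b (vmul (hmul e a) i)
  A7 : ∀ a b, hmul a (vmul i b) = vmul a (hmul e (vmul i b))
  A8 : ∀ a b, hmul (vmul i a) b = vmul b (hmul (vmul i a) e)

variable {k A : Type*} [CommRing k] [AddCommGroup A] [Module k A]

/-- `Φ_L(a) = a ⋆ e`. -/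
def DoubleAlgebra.PhiL (D : DoubleAlgebra k A) (a : A) : A := D.hmul a D.e
/-- `Φ_R(a) = e ⋆ a`. -/
def DoubleAlgebra.PhiR (D : DoubleAlgebra k A) (a : A) : A := D.hmul D.e a
/-- `Φ_B(a) = a ∘ i`. -/
def DoubleAlgebra.PhiB (D : DoubleAlgebra k A) (a : A) : A := D.vmul a D.i
/-- `Φ_T(a) = i ∘ a`. -/
def DoubleAlgebra.PhiT (D : DoubleAlgebra k A) (a : A) : A := D.vmul D.i a

/-- `r ∈ R` is invertible in `V` iff it has an inverse in `R`;
moreover if `v∘r = e = r∘v` then `Φ_RΦ_T(v) = Φ_RΦ_B(v)` is a two-sided vertical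
inverse of `r` lying in `R`. -/
theorem stmt8 (D : DoubleAlgebra k A) (r : A) (hr : r ∈ Set.range D.PhiR) :
    ((∃ v, D.vmul v r = D.e ∧ D.vmul r v = D.e) ↔
      (∃ w ∈ Set.range D.PhiR, D.vmul w r = D.e ∧ D.vmul r w = D.e)) ∧
    (∀ v, D.vmul v r = D.e → D.vmul r v = D.e →
      D.PhiR (D.PhiT v) = D.PhiR (D.PhiB v) ∧
      D.PhiR (D.PhiT v) ∈ Set.range D.PhiR ∧
      D.vmul (D.PhiR (D.PhiT v)) r = D.e ∧
      D.vmul r (D.PhiR (D.PhiT v)) = D.e) := by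
  obtain ⟨x, hx⟩ := hr
  simp only [DoubleAlgebra.PhiR] at hx
  have L1 : D.hmul D.e (D.vmul D.i r) = r := by
    have h := D.A5 D.e x
    rw [D.e_vmul, hx] at h
    exact h.symm
  have L2 : D.hmul D.e (D.vmul r D.i) = r := by
    have h := D.A6 x D.e
    rw [D.vmul_e, hx] at h
    exact h.symm
  have S4 : ∀ a, D.hmul a (D.vmul D.i r) = D.vmul a r := by
    intro a; rw [D.A7 a r, L1]
  have S3 : ∀ a, D.hmul a (D.vmul r D.i) = D.vmul r a := by
    intro a; rw [D.A4 a r, L2]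
  have key : ∀ v, D.vmul v r = D.e → D.vmul r v = D.e →
      D.PhiR (D.PhiT v) = D.PhiR (D.PhiB v) ∧
      D.PhiR (D.PhiT v) ∈ Set.range D.PhiR ∧
      D.vmul (D.PhiR (D.PhiT v)) r = D.e ∧
      D.vmul r (D.PhiR (D.PhiT v)) = D.e := by
    intro v hv1 hv2
    simp only [DoubleAlgebra.PhiR, DoubleAlgebra.PhiT, DoubleAlgebra.PhiB]
    set w := D.hmul D.e (D.vmul D.i v) with hw_def
    set w' := D.hmul D.e (D.vmul v D.i) with hw'_def
    have hw : D.vmul w r = D.e := by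
      calc D.vmul w r = D.hmul w (D.vmul D.i r) := (S4 w).symm
        _ = D.hmul D.e (D.hmul (D.vmul D.i v) (D.vmul D.i r)) :=
            D.hmul_assoc D.e (D.vmul D.i v) (D.vmul D.i r)
        _ = D.hmul D.e (D.vmul (D.vmul D.i v) r) := by rw [S4]
        _ = D.e := by rw [D.vmul_assoc, hv1, D.vmul_e, D.hmul_i]
    have hw' : D.vmul r w' = D.e := by
      calc D.vmul r w' = D.hmul w' (D.vmul r D.i) := (S3 w').symm
        _ = D.hmul D.e (D.hmul (D.vmul v D.i) (D.vmul r D.i)) :=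
            D.hmul_assoc D.e (D.vmul v D.i) (D.vmul r D.i)
        _ = D.hmul D.e (D.vmul r (D.vmul v D.i)) := by rw [S3]
        _ = D.e := by rw [← D.vmul_assoc, hv2, D.e_vmul, D.hmul_i]
    have hww' : w = w' := by
      calc w = D.vmul w D.e := (D.vmul_e w).symm
        _ = D.vmul w (D.vmul r w') := by rw [hw']
        _ = D.vmul (D.vmul w r) w' := (D.vmul_assoc w r w').symm
        _ = w' := by rw [hw, D.e_vmul]
    refine ⟨hww', ⟨D.vmul D.i v, rfl⟩, hw, ?_⟩
    rw [hww']; exact hw'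
  refine ⟨⟨?_, ?_⟩, key⟩
  · rintro ⟨v, hv1, hv2⟩
    obtain ⟨_, hmem, h1, h2⟩ := key v hv1 hv2
    exact ⟨_, hmem, h1, h2⟩
  · rintro ⟨w, _, h1, h2⟩
    exact ⟨w, h1, h2⟩
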